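/- Let p be a prime, n ≥ 1, and let v_1, ..., v_{3n} ∈ 𝔽_p² be nonzero vectors with the second coordinates of v_1, ..., v_n all nonzero. Assume that no n+1 of the vectors v_1, ..., v_{3n} lie in the same projective class. Then there exist indices i_1 < ... < i_n in {n+1, ..., 3n} such that the sum over all functions I: {1,...,2n} → {1,2} with exactly n values equal to 1 of the product ∏_{i=1}^n v_i(I(i)) · ∏_{j=1}^n v_{i_j}(I(n+j)) is nonzero in 𝔽_p. -/

import Mathlib

open Polynomial Finset
open scoped Classical

noncomputable def lin {K : Type*} [CommRing K] (w : K × K) : Polynomial K := C w.1 * X + C w.2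

noncomputable def PP {K : Type*} [CommRing K] {ι : Type*} (f : ι → K × K) (B : Multiset ι) :
    Polynomial K := (B.map fun i => lin (f i)).prod

@[simp] lemma PP_zero {K : Type*} [CommRing K] {ι : Type*} (f : ι → K × K) :
    PP f 0 = 1 := by simp [PP]

lemma PP_cons {K : Type*} [CommRing K] {ι : Type*} (f : ι → K × K) (i : ι) (B : Multiset ι) :
    PP f (i ::ₘ B) = lin (f i) * PP f B := by simp [PP]

def PRel {F : Type*} [Field F] (x y : F × F) : Prop := ∃ c : F, c ≠ 0 ∧ x = c • y

section rel
variable {F : Type*} [Field F]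

lemma PRel.rfl (x : F × F) : PRel x x := ⟨1, one_ne_zero, by simp⟩

lemma PRel.symm {x y : F × F} (h : PRel x y) : PRel y x := by
  obtain ⟨c, hc, rfl⟩ := h
  exact ⟨c⁻¹, inv_ne_zero hc, by simp [smul_smul, inv_mul_cancel₀ hc]⟩

lemma PRel.trans {x y z : F × F} (h : PRel x y) (h' : PRel y z) : PRel x z := by
  obtain ⟨c, hc, rfl⟩ := h
  obtain ⟨d, hd, rfl⟩ := h'
  exact ⟨c * d, mul_ne_zero hc hd, by simp [smul_smul]⟩


section cpl
variable {K : Type*} [CommRing K] {ι : Type*} [DecidableEq ι]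

lemma coeff_prod_lin (f : ι → K × K) (s : Finset ι) (k : ℕ) :
    (∏ i ∈ s, lin (f i)).coeff k
      = ∑ T ∈ s.powersetCard k, (∏ i ∈ T, (f i).1) * ∏ i ∈ s \ T, (f i).2 := by
  induction s using Finset.induction_on generalizing k with
  | empty =>
      rcases k with _ | k
      · simp
      · rw [powersetCard_eq_empty.2 (by simp)]; simp [Polynomial.coeff_one]
  | @insert a s ha ih =>
      rw [Finset.prod_insert ha]
      have hlin : lin (f a) * ∏ i ∈ s, lin (f i)
          = C (f a).1 * (X * ∏ i ∈ s, lin (f i)) + C (f a).2 * ∏ i ∈ s, lin (f i) := by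
        unfold lin; ring
      rw [hlin]
      rcases k with _ | k
      · rw [Polynomial.coeff_add, Polynomial.coeff_C_mul, Polynomial.coeff_C_mul,
          Polynomial.coeff_X_mul_zero, ih 0]
        rw [powersetCard_zero, powersetCard_zero]
        simp only [Finset.sum_singleton, Finset.prod_empty, Finset.sdiff_empty, one_mul, mul_zero,
          zero_add]
        rw [Finset.prod_insert ha]
      · rw [Polynomial.coeff_add, Polynomial.coeff_C_mul, Polynomial.coeff_C_mul,
          Polynomial.coeff_X_mul, ih k, ih (k+1),
          Finset.powersetCard_succ_insert ha, Finset.sum_union]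
        · rw [Finset.sum_image (by
            intro x hx y hy hxy
            have hx' : a ∉ x := fun h => ha ((Finset.mem_powersetCard.1 hx).1 h)
            have hy' : a ∉ y := fun h => ha ((Finset.mem_powersetCard.1 hy).1 h)
            have := congrArg (Finset.erase · a) hxy
            simpa [Finset.erase_insert hx', Finset.erase_insert hy'] using this)]
          rw [add_comm, Finset.mul_sum, Finset.mul_sum]
          congr 1
          · -- terms for T not containing a
            apply Finset.sum_congr rfl
            intro T hT
            have hT' : a ∉ T := fun h => ha ((Finset.mem_powersetCard.1 hT).1 h)
            have hTs : T ⊆ s := (Finset.mem_powersetCard.1 hT).1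
            rw [Finset.insert_sdiff_of_notMem _ hT', Finset.prod_insert (by simp [ha])]
            ring
          · -- terms with a inserted
            apply Finset.sum_congr rfl
            intro T hT
            have hT' : a ∉ T := fun h => ha ((Finset.mem_powersetCard.1 hT).1 h)
            have hss : insert a s \ insert a T = s \ T := by
              ext x
              simp only [Finset.mem_sdiff, Finset.mem_insert]
              constructor
              · rintro ⟨h1 | h1, h2⟩
                · exact (h2 (Or.inl h1)).elim
                · exact ⟨h1, fun h => h2 (Or.inr h)⟩
              · rintro ⟨h1, h2⟩
                exact ⟨Or.inr h1, fun h => h.elim (fun e => ha (e ▸ h1)) h2⟩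
            rw [Finset.prod_insert hT', hss]
            ring
        · rw [Finset.disjoint_right]
          intro T hT hT2
          rcases Finset.mem_image.1 hT with ⟨x, hx, rfl⟩
          exact ha ((Finset.mem_powersetCard.1 hT2).1 (Finset.mem_insert_self a x))

end cpl

section rel2
variable {F : Type*} [Field F]

lemma rel_of_det {u w : F × F} (hu : u ≠ 0) (hw : w ≠ 0)
    (h : u.1 * w.2 - u.2 * w.1 = 0) : PRel u w := by
  by_cases h1 : w.1 ≠ 0
  · have hc : u.1 / w.1 ≠ 0 → True := fun _ => trivial
    refine ⟨u.1 / w.1, ?_, ?_⟩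
    · intro hc
      have hu1 : u.1 = 0 := by
        by_contra hne
        exact hne (by rwa [_root_.div_eq_zero_iff, or_iff_left h1] at hc)
      have hu2 : u.2 = 0 := by
        rw [hu1] at h
        simp only [zero_mul, zero_sub, neg_eq_zero, mul_eq_zero] at h
        tauto
      exact hu (Prod.ext hu1 hu2)
    · have h2 : u.2 = u.1 / w.1 * w.2 := by field_simp; linear_combination -h
      exact Prod.ext (by rw [Prod.smul_fst, smul_eq_mul, div_mul_cancel₀ _ h1]) h2
  · push_neg at h1
    have h2 : w.2 ≠ 0 := fun hc => hw (Prod.ext h1 hc)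
    have hu1 : u.1 = 0 := by
      rw [h1] at h; simp only [mul_zero, sub_zero, mul_eq_zero] at h; tauto
    refine ⟨u.2 / w.2, ?_, ?_⟩
    · intro hc
      have : u.2 = 0 := by rwa [_root_.div_eq_zero_iff, or_iff_left h2] at hc
      exact hu (Prod.ext hu1 this)
    · exact Prod.ext (by rw [hu1]; simp [h1]) (by rw [Prod.smul_snd, smul_eq_mul, div_mul_cancel₀ _ h2])

lemma indep_solve {u w : F × F} (hu : u ≠ 0) (hw : w ≠ 0) (hr : ¬ PRel u w)
    {A B : F} (h1 : u.1 * A + u.2 * B = 0) (h2 : w.1 * A + w.2 * B = 0) :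
    A = 0 ∧ B = 0 := by
  have hd : u.1 * w.2 - u.2 * w.1 ≠ 0 := fun h => hr (rel_of_det hu hw h)
  constructor
  · have : (u.1 * w.2 - u.2 * w.1) * A = 0 := by linear_combination w.2 * h1 - u.2 * h2
    exact (mul_eq_zero.1 this).resolve_left hd
  · have : (u.1 * w.2 - u.2 * w.1) * B = 0 := by linear_combination u.1 * h2 - w.1 * h1
    exact (mul_eq_zero.1 this).resolve_left hd


variable {ι : Type*} [DecidableEq ι]

lemma main_claim (f : ι → F × F) :
    ∀ (n : ℕ) (B : Multiset ι), Multiset.card B = 2 * n →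
      (∀ i ∈ B, f i ≠ 0) →
      (∀ x : F × F, x ≠ 0 → Multiset.card (B.filter fun i => PRel (f i) x) ≤ n) →
      ∀ (Q : Polynomial F) (N : ℕ),
        (∀ B' ≤ B, Multiset.card B' = n → (Q * PP f B').coeff N = 0) →
        ∀ k, k ≤ n → (Q * X ^ k).coeff N = 0 := by
  intro n
  induction n with
  | zero =>
      intro B hB hnz hcl Q N h0 k hk
      interval_cases k
      simpa using h0 0 (by simp) rfl
  | succ n IH =>
      intro B hcard hnz hcl Q N h0 k hk
      -- choose u with maximal class size
      have hBne : B ≠ 0 := by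
        intro h; rw [h] at hcard; simp at hcard
      obtain ⟨u, huF, humax⟩ := Finset.exists_max_image B.toFinset
        (fun i => Multiset.card (B.filter fun j => PRel (f j) (f i)))
        (by rwa [Multiset.toFinset_nonempty])
      have huB : u ∈ B := Multiset.mem_toFinset.1 huF
      set B₁ := B.filter (fun j => ¬ PRel (f j) (f u)) with hB₁
      have hsplit : Multiset.card (B.filter fun j => PRel (f j) (f u))
          + Multiset.card B₁ = 2 * (n + 1) := by
        rw [hB₁, ← Multiset.card_add, Multiset.filter_add_not _ B, hcard]
      have hclu : Multiset.card (B.filter fun j => PRel (f j) (f u)) ≤ n + 1 :=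
        hcl (f u) (hnz u huB)
      have hB₁ne : B₁ ≠ 0 := by
        intro h; rw [h] at hsplit; simp at hsplit; omega
      obtain ⟨w, hwF, hwmax⟩ := Finset.exists_max_image B₁.toFinset
        (fun i => Multiset.card (B₁.filter fun j => PRel (f j) (f i)))
        (by rwa [Multiset.toFinset_nonempty])
      have hwB₁ : w ∈ B₁ := Multiset.mem_toFinset.1 hwF
      have hwB : w ∈ B := Multiset.mem_of_mem_filter hwB₁
      have hwnotrel : ¬ PRel (f w) (f u) := by
        have h := hwB₁; rw [hB₁, Multiset.mem_filter] at h; exact h.2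
      have hwne : w ≠ u := fun h => hwnotrel (h ▸ PRel.rfl (f u))
      set DD : Multiset ι := (B.erase u).erase w with hC
      have hwBu : w ∈ B.erase u := (Multiset.mem_erase_of_ne hwne).2 hwB
      have hCcard : Multiset.card DD = 2 * n := by
        rw [hC, Multiset.card_erase_of_mem hwBu, Multiset.card_erase_of_mem huB, hcard]
        simp only [Nat.pred_eq_sub_one]
        omega
      have hCle : DD ≤ B := le_trans (Multiset.erase_le _ _) (Multiset.erase_le _ _)
      have hCnz : ∀ i ∈ DD, f i ≠ 0 := fun i hi => hnz i (Multiset.mem_of_le hCle hi)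
      -- class bound for C
      have hCcl : ∀ x : F × F, x ≠ 0 →
          Multiset.card (DD.filter fun i => PRel (f i) x) ≤ n := by
        intro x hx
        by_cases h1 : PRel (f u) x
        · have hBe : u ::ₘ B.erase u = B := Multiset.cons_erase huB
          have hBcount : Multiset.card (B.filter fun i => PRel (f i) x)
              = Multiset.card ((B.erase u).filter fun i => PRel (f i) x) + 1 := by
            conv_lhs => rw [← hBe]
            rw [Multiset.filter_cons_of_pos (p := fun i => PRel (f i) x) (B.erase u) h1]
            simp
          have h2 : Multiset.card (DD.filter fun i => PRel (f i) x)
              ≤ Multiset.card ((B.erase u).filter fun i => PRel (f i) x) :=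
            Multiset.card_le_card (Multiset.filter_le_filter _ (Multiset.erase_le _ _))
          have h3 := hcl x hx
          omega
        · by_cases h2 : PRel (f w) x
          · have hBe : w ::ₘ DD = B.erase u := by rw [hC]; exact Multiset.cons_erase hwBu
            have hBcount : Multiset.card ((B.erase u).filter fun i => PRel (f i) x)
                = Multiset.card (DD.filter fun i => PRel (f i) x) + 1 := by
              conv_lhs => rw [← hBe]
              rw [Multiset.filter_cons_of_pos (p := fun i => PRel (f i) x) DD h2]
              simp
            have h3 : Multiset.card ((B.erase u).filter fun i => PRel (f i) x)
                ≤ Multiset.card (B.filter fun i => PRel (f i) x) :=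
              Multiset.card_le_card (Multiset.filter_le_filter _ (Multiset.erase_le _ _))
            have h4 := hcl x hx
            omega
          · -- neither class of u nor of w; show B-count already ≤ n
          
            by_contra hcon
            push_neg at hcon
            have hBx : n + 1 ≤ Multiset.card (B.filter fun i => PRel (f i) x) := by
              have := Multiset.card_le_card
                (Multiset.filter_le_filter (fun i => PRel (f i) x) hCle)
              omega
            have hBxe : Multiset.card (B.filter fun i => PRel (f i) x) = n + 1 :=
              le_antisymm (hcl x hx) hBx
            -- all of x's class avoids u's class
            have hsubB₁ : B₁.filter (fun i => PRel (f i) x)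
                = B.filter (fun i => PRel (f i) x) := by
              rw [hB₁, Multiset.filter_filter]
              apply Multiset.filter_congr
              intro j hj
              constructor
              · rintro ⟨hpx, -⟩; exact hpx
              · intro hpx
                refine ⟨hpx, fun hju => h1 ?_⟩
                exact hju.symm.trans hpx
            -- a representative of x's class
            obtain ⟨i₀, hi₀⟩ := Multiset.card_pos_iff_exists_mem.1
              (by rw [hBxe]; omega : 0 < Multiset.card (B.filter fun i => PRel (f i) x))
            have hi₀B : i₀ ∈ B := (Multiset.mem_filter.1 hi₀).1
            have hri₀ : PRel (f i₀) x := (Multiset.mem_filter.1 hi₀).2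
            have hiff : ∀ y : F × F, PRel y x ↔ PRel y (f i₀) :=
              fun y => ⟨fun h => h.trans hri₀.symm, fun h => h.trans hri₀⟩
            -- u's class has exactly n+1 elements
            have hmu : Multiset.card (B.filter fun j => PRel (f j) (f u)) = n + 1 := by
              have h5 : Multiset.card (B.filter fun j => PRel (f j) (f i₀)) = n + 1 := by
                rw [← hBxe]
                congr 1
                exact (Multiset.filter_congr fun j _ => (hiff (f j)).symm)
              have := humax i₀ (Multiset.mem_toFinset.2 hi₀B)
              simp only [h5] at this
              omega
            have hcardB₁ : Multiset.card B₁ = n + 1 := by omega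
            -- x's class inside B₁ has n+1 elements
            have hB₁x : Multiset.card (B₁.filter fun i => PRel (f i) x) = n + 1 := by
              rw [hsubB₁, hBxe]
            -- i₀ ∈ B₁
            have hi₀B₁ : i₀ ∈ B₁ := by
              rw [hB₁, Multiset.mem_filter]
              refine ⟨hi₀B, fun hju => h1 ?_⟩
              exact hju.symm.trans hri₀
            -- w's class inside B₁ has ≥ n+1 elements
            have hwclass : n + 1 ≤ Multiset.card (B₁.filter fun j => PRel (f j) (f w)) := by
              have h6 : Multiset.card (B₁.filter fun j => PRel (f j) (f i₀)) = n + 1 := by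
                rw [← hB₁x]
                congr 1
                exact (Multiset.filter_congr fun j _ => (hiff (f j)).symm)
              have := hwmax i₀ (Multiset.mem_toFinset.2 hi₀B₁)
              simp only [h6] at this
              omega
            -- the two classes in B₁ are disjoint
            have hdisj : Multiset.card (B₁.filter fun j => PRel (f j) (f w))
                + Multiset.card (B₁.filter fun j => PRel (f j) x)
                ≤ Multiset.card B₁ := by
              have hff := Multiset.filter_add_filter (fun j => PRel (f j) (f w))
                (fun j => PRel (f j) x) B₁
              have hand : B₁.filter (fun j => PRel (f j) (f w) ∧ PRel (f j) x) = 0 := by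
                rw [Multiset.filter_eq_nil]
                rintro j - ⟨hjw, hjx⟩
                exact h2 (hjw.symm.trans hjx)
              have hor : Multiset.card (B₁.filter fun j =>
                  PRel (f j) (f w) ∨ PRel (f j) x) ≤ Multiset.card B₁ :=
                Multiset.card_le_card (Multiset.filter_le _ _)
              have := congrArg Multiset.card hff
              rw [Multiset.card_add, Multiset.card_add, hand] at this
              simp at this
              omega
            omega
      -- apply IH twice
      have hind : ∀ g : ι, f g ≠ 0 → (∀ B'' : Multiset ι, B'' ≤ DD → g ::ₘ B'' ≤ B) →
          ∀ k', k' ≤ n → (Q * lin (f g) * X ^ k').coeff N = 0 := by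
        intro g hgnz hgcons
        apply IH DD hCcard hCnz hCcl (Q * lin (f g)) N
        intro B'' hB'' hB''card
        have := h0 (g ::ₘ B'') (hgcons B'' hB'') (by simp [hB''card])
        rwa [PP_cons, ← mul_assoc] at this
      have hu' : ∀ B'' : Multiset ι, B'' ≤ DD → u ::ₘ B'' ≤ B := by
        intro B'' h
        have h2 : u ::ₘ B'' ≤ u ::ₘ B.erase u :=
          Multiset.cons_le_cons u (le_trans h (Multiset.erase_le _ _))
        rwa [Multiset.cons_erase huB] at h2
      have hw' : ∀ B'' : Multiset ι, B'' ≤ DD → w ::ₘ B'' ≤ B := by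
        intro B'' h
        have h2 : w ::ₘ B'' ≤ w ::ₘ DD := Multiset.cons_le_cons w h
        rw [hC, Multiset.cons_erase hwBu] at h2
        exact le_trans h2 (Multiset.erase_le _ _)
      have hku := hind u (hnz u huB) hu'
      have hkw := hind w (hnz w hwB) hw'
      have key : ∀ k', k' ≤ n → (Q * X ^ (k' + 1)).coeff N = 0 ∧ (Q * X ^ k').coeff N = 0 := by
        intro k' hk'
        have e1 : (Q * lin (f u) * X ^ k').coeff N
            = (f u).1 * (Q * X ^ (k' + 1)).coeff N + (f u).2 * (Q * X ^ k').coeff N := by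
          have h1 : Q * lin (f u) * X ^ k'
              = C (f u).1 * (Q * X ^ (k' + 1)) + C (f u).2 * (Q * X ^ k') := by
            unfold lin; ring
          rw [h1, coeff_add, coeff_C_mul, coeff_C_mul]
        have e2 : (Q * lin (f w) * X ^ k').coeff N
            = (f w).1 * (Q * X ^ (k' + 1)).coeff N + (f w).2 * (Q * X ^ k').coeff N := by
          have h1 : Q * lin (f w) * X ^ k'
              = C (f w).1 * (Q * X ^ (k' + 1)) + C (f w).2 * (Q * X ^ k') := by
            unfold lin; ring
          rw [h1, coeff_add, coeff_C_mul, coeff_C_mul]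
        exact indep_solve (hnz u huB) (hnz w hwB) (fun h => hwnotrel h.symm)
          (by rw [← e1]; exact hku k' hk') (by rw [← e2]; exact hkw k' hk')
      rcases Nat.eq_zero_or_pos k with h | h
      · subst h; exact (key 0 (Nat.zero_le n)).2
      · obtain ⟨k', rfl⟩ : ∃ k'', k = k'' + 1 := ⟨k - 1, by omega⟩
        exact (key k' (by omega)).1


end rel2

section glue
variable {K : Type*} [CommRing K]

lemma sum_fun_eq_sum_subset {n : ℕ} (a : Fin n → K × K) (k : ℕ) :
    ∑ I ∈ Finset.univ.filter
        (fun I : Fin n → Fin 2 => (Finset.univ.filter fun i => I i = 0).card = k),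
      ∏ i, (if I i = 0 then (a i).1 else (a i).2)
    = ∑ T ∈ (Finset.univ : Finset (Fin n)).powersetCard k,
        (∏ i ∈ T, (a i).1) * ∏ i ∈ Finset.univ \ T, (a i).2 := by
  have h2 : ∀ x : Fin 2, x ≠ 0 → x = 1 := by decide
  refine Finset.sum_bij' (fun I _ => Finset.univ.filter fun i => I i = 0)
    (fun T _ => fun i => if i ∈ T then 0 else 1) ?_ ?_ ?_ ?_ ?_
  · intro I hI
    rw [Finset.mem_powersetCard]
    exact ⟨Finset.subset_univ _, (Finset.mem_filter.1 hI).2⟩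
  · intro T hT
    rw [Finset.mem_filter]
    refine ⟨Finset.mem_univ _, ?_⟩
    rw [Finset.mem_powersetCard] at hT
    show (Finset.univ.filter fun i => (if i ∈ T then (0 : Fin 2) else 1) = 0).card = k
    have hTT : (Finset.univ.filter fun i => (if i ∈ T then (0 : Fin 2) else 1) = 0) = T := by
      ext i
      by_cases hi : i ∈ T <;> simp [hi]
    rw [hTT]
    exact hT.2
  · intro I hI
    funext i
    by_cases hi : I i = 0
    · simp [hi]
    · simp [hi, h2 _ hi]
  · intro T hT
    ext i
    by_cases hi : i ∈ T <;> simp [hi]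
  · intro I hI
    rw [Finset.prod_ite (fun i => (a i).1) (fun i => (a i).2), Finset.filter_not]

lemma pair_split {n : ℕ} (a b : Fin n → K × K) :
    ∑ IJ ∈ Finset.univ.filter
        (fun IJ : (Fin n → Fin 2) × (Fin n → Fin 2) =>
          (Finset.univ.filter fun i => IJ.1 i = 0).card +
          (Finset.univ.filter fun j => IJ.2 j = 0).card = n),
      (∏ i, (if IJ.1 i = 0 then (a i).1 else (a i).2)) *
      (∏ j, (if IJ.2 j = 0 then (b j).1 else (b j).2))
    = ∑ k ∈ Finset.range (n + 1),
        (∑ I ∈ Finset.univ.filter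
            (fun I : Fin n → Fin 2 => (Finset.univ.filter fun i => I i = 0).card = k),
          ∏ i, (if I i = 0 then (a i).1 else (a i).2))
        * (∑ J ∈ Finset.univ.filter
            (fun J : Fin n → Fin 2 => (Finset.univ.filter fun j => J j = 0).card = n - k),
          ∏ j, (if J j = 0 then (b j).1 else (b j).2)) := by
  have hle : ∀ I : Fin n → Fin 2, (Finset.univ.filter fun i => I i = 0).card ≤ n := by
    intro I
    calc (Finset.univ.filter fun i => I i = 0).card ≤ (Finset.univ : Finset (Fin n)).card :=
      Finset.card_filter_le _ _
    _ = n := by simp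
  have hset : Finset.univ.filter
        (fun IJ : (Fin n → Fin 2) × (Fin n → Fin 2) =>
          (Finset.univ.filter fun i => IJ.1 i = 0).card +
          (Finset.univ.filter fun j => IJ.2 j = 0).card = n)
      = (Finset.range (n + 1)).biUnion (fun k =>
          (Finset.univ.filter
            (fun I : Fin n → Fin 2 => (Finset.univ.filter fun i => I i = 0).card = k)) ×ˢ
          (Finset.univ.filter
            (fun J : Fin n → Fin 2 => (Finset.univ.filter fun j => J j = 0).card = n - k))) := by
    ext IJ
    simp only [Finset.mem_filter, Finset.mem_univ, true_and, Finset.mem_biUnion,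
      Finset.mem_range, Finset.mem_product]
    constructor
    · intro h
      exact ⟨(Finset.univ.filter fun i => IJ.1 i = 0).card,
        by have := hle IJ.1; omega, rfl, by omega⟩
    · rintro ⟨k, hk, h1, h2⟩
      have := hle IJ.2
      omega
  rw [hset, Finset.sum_biUnion]
  · apply Finset.sum_congr rfl
    intro k hk
    rw [Finset.sum_mul_sum, Finset.sum_product]
  · intro k hk k' hk' hne
    simp only [Function.onFun]
    rw [Finset.disjoint_left]
    intro IJ h1 h2
    rw [Finset.mem_product, Finset.mem_filter, Finset.mem_filter] at h1 h2
    exact hne (h1.1.2 ▸ h2.1.2 ▸ rfl)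

end glue

section final

lemma lin_ne_zero {F : Type*} [Field F] {w : F × F} (hw : w ≠ 0) : lin w ≠ 0 := by
  intro h
  apply hw
  have h1 := congrArg (fun q => Polynomial.coeff q 1) h
  have h0 := congrArg (fun q => Polynomial.coeff q 0) h
  simp [lin] at h1 h0
  exact Prod.ext h1 h0

lemma lin_natDegree {F : Type*} [Field F] (w : F × F) : (lin w).natDegree ≤ 1 := by
  unfold lin
  apply le_trans (Polynomial.natDegree_add_le _ _)
  simp only [max_le_iff]
  constructor
  · apply le_trans (Polynomial.natDegree_C_mul_le _ _)
    simp [Polynomial.natDegree_X]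
  · simp

theorem stmt_5 (p : ℕ) (hp : p.Prime) (n : ℕ) (hn : 1 ≤ n)
    (v : Fin (3 * n) → ZMod p × ZMod p)
    (hv : ∀ i, v i ≠ 0)
    (hsnd : ∀ i : Fin (3 * n), (i : ℕ) < n → (v i).2 ≠ 0)
    (hclass : ¬ ∃ (S : Finset (Fin (3 * n))) (w : ZMod p × ZMod p),
      S.card = n + 1 ∧ w ≠ 0 ∧ ∀ i ∈ S, ∃ c : ZMod p, c ≠ 0 ∧ v i = c • w) :
    ∃ g : Fin n → Fin (3 * n), StrictMono g ∧ (∀ j, n ≤ ((g j : ℕ))) ∧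
      (∑ IJ ∈ Finset.univ.filter
          (fun IJ : (Fin n → Fin 2) × (Fin n → Fin 2) =>
            (Finset.univ.filter fun i => IJ.1 i = 0).card +
            (Finset.univ.filter fun j => IJ.2 j = 0).card = n),
        (∏ i : Fin n,
            (if IJ.1 i = 0 then (v ⟨(i : ℕ), by omega⟩).1 else (v ⟨(i : ℕ), by omega⟩).2)) *
        (∏ j : Fin n,
            (if IJ.2 j = 0 then (v (g j)).1 else (v (g j)).2))) ≠ 0 := by
  haveI : Fact p.Prime := ⟨hp⟩
  set a : Fin n → ZMod p × ZMod p := fun i => v ⟨(i : ℕ), by omega⟩ with ha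
  set Q : Polynomial (ZMod p) := ∏ i : Fin n, lin (a i) with hQdef
  set Bs : Finset (Fin (3 * n)) := Finset.univ.filter (fun i => n ≤ (i : ℕ)) with hBs
  have hBscard : Bs.card = 2 * n := by
    have h1 : (Finset.univ.filter (fun i : Fin (3 * n) => n ≤ (i : ℕ))).card
        + (Finset.univ.filter (fun i : Fin (3 * n) => ¬ n ≤ (i : ℕ))).card
        = 3 * n := by
      rw [Finset.card_filter_add_card_filter_not]
      simp
    have h2 : (Finset.univ.filter (fun i : Fin (3 * n) => ¬ n ≤ (i : ℕ))).card = n := by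
      have hb : (Finset.univ.filter (fun i : Fin (3 * n) => ¬ n ≤ (i : ℕ))).card
          = (Finset.range n).card := by
        apply Finset.card_bij (fun (i : Fin (3 * n)) _ => (i : ℕ))
        · intro i hi
          rw [Finset.mem_filter] at hi
          rw [Finset.mem_range]
          omega
        · intro i hi j hj hij
          exact Fin.ext hij
        · intro m hm
          rw [Finset.mem_range] at hm
          refine ⟨⟨m, by omega⟩, ?_, rfl⟩
          rw [Finset.mem_filter]
          exact ⟨Finset.mem_univ _, by simp; omega⟩
      rw [Finset.card_range] at hb
      exact hb
    rw [hBs]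
    omega
  set B : Multiset (Fin (3 * n)) := Bs.val with hB
  have hBcard : Multiset.card B = 2 * n := hBscard
  have hnzB : ∀ i ∈ B, v i ≠ 0 := fun i _ => hv i
  have hclB : ∀ x : ZMod p × ZMod p, x ≠ 0 →
      Multiset.card (B.filter fun i => PRel (v i) x) ≤ n := by
    intro x hx
    by_contra hcon
    push_neg at hcon
    have hfin : (Bs.filter fun i => PRel (v i) x).card
        = Multiset.card (B.filter fun i => PRel (v i) x) := by
      rw [Finset.card, Finset.filter_val]
    obtain ⟨S, hSsub, hScard⟩ := Finset.exists_subset_card_eq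
      (show n + 1 ≤ (Bs.filter fun i => PRel (v i) x).card by omega)
    exact hclass ⟨S, x, hScard, hx,
      fun i hi => (Finset.mem_filter.1 (hSsub hi)).2⟩
  have hQne : Q ≠ 0 := by
    rw [hQdef]
    rw [Finset.prod_ne_zero_iff]
    intro i _
    exact lin_ne_zero (hv _)
  have hQdeg : Q.natDegree ≤ n := by
    rw [hQdef]
    apply le_trans (Polynomial.natDegree_prod_le _ _)
    calc ∑ i : Fin n, (lin (a i)).natDegree ≤ ∑ _i : Fin n, 1 :=
      Finset.sum_le_sum (fun i _ => lin_natDegree (a i))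
    _ = n := by simp
  have hexists : ∃ B', B' ≤ B ∧ Multiset.card B' = n ∧ (Q * PP v B').coeff n ≠ 0 := by
    by_contra hcon
    push_neg at hcon
    have hall := main_claim v n B hBcard hnzB hclB Q n
      (fun B' hle hcard => hcon B' hle hcard)
    have hQ0 : Q = 0 := by
      ext j
      rcases le_or_gt j n with hj | hj
      · have h1 := hall (n - j) (by omega)
        rw [Polynomial.coeff_mul_X_pow'] at h1
        rw [if_pos (by omega : n - j ≤ n)] at h1
        rw [show n - (n - j) = j by omega] at h1
        exact h1
      · simp
        exact Polynomial.coeff_eq_zero_of_natDegree_lt (lt_of_le_of_lt hQdeg hj)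
    exact hQne hQ0
  obtain ⟨B', hB'le, hB'card, hB'ne⟩ := hexists
  have hnodup : B'.Nodup := Multiset.nodup_of_le hB'le Bs.nodup
  set T : Finset (Fin (3 * n)) := ⟨B', hnodup⟩ with hT
  have hTcard : T.card = n := hB'card
  have hTmem : ∀ i ∈ T, n ≤ (i : ℕ) := by
    intro i hi
    have h1 : i ∈ B := Multiset.mem_of_le hB'le hi
    have h2 : i ∈ Bs := h1
    exact (Finset.mem_filter.1 h2).2
  set g : Fin n → Fin (3 * n) := fun j => ((T.orderIsoOfFin hTcard) j : Fin (3 * n)) with hg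
  have hginto : ∀ j, g j ∈ T := fun j => ((T.orderIsoOfFin hTcard) j).2
  refine ⟨g, ?_, fun j => hTmem _ (hginto j), ?_⟩
  · intro x y hxy
    exact Subtype.coe_lt_coe.2 ((T.orderIsoOfFin hTcard).strictMono hxy)
  · have hPP : PP v B' = ∏ j : Fin n, lin (v (g j)) := by
      have h1 : PP v B' = ∏ i ∈ T, lin (v i) := rfl
      rw [h1]
      refine (Finset.prod_bij (fun (j : Fin n) _ => g j) ?_ ?_ ?_ ?_).symm
      · intro j _
        exact hginto j
      · intro j1 _ j2 _ h
        exact (T.orderIsoOfFin hTcard).injective (Subtype.ext h)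
      · intro i hi
        exact ⟨(T.orderIsoOfFin hTcard).symm ⟨i, hi⟩, Finset.mem_univ _,
          congrArg Subtype.val ((T.orderIsoOfFin hTcard).apply_symm_apply ⟨i, hi⟩)⟩
      · intro j _
        rfl
    have hmain : (∑ IJ ∈ Finset.univ.filter
          (fun IJ : (Fin n → Fin 2) × (Fin n → Fin 2) =>
            (Finset.univ.filter fun i => IJ.1 i = 0).card +
            (Finset.univ.filter fun j => IJ.2 j = 0).card = n),
        (∏ i : Fin n,
            (if IJ.1 i = 0 then (a i).1 else (a i).2)) *
        (∏ j : Fin n,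
            (if IJ.2 j = 0 then (v (g j)).1 else (v (g j)).2)))
        = (Q * PP v B').coeff n := by
      rw [pair_split a (fun j => v (g j))]
      rw [Polynomial.coeff_mul, Finset.Nat.sum_antidiagonal_eq_sum_range_succ_mk]
      apply Finset.sum_congr rfl
      intro k hk
      rw [sum_fun_eq_sum_subset a k, sum_fun_eq_sum_subset (fun j => v (g j)) (n - k)]
      rw [hQdef, hPP]
      rw [coeff_prod_lin a Finset.univ k,
        coeff_prod_lin (fun j => v (g j)) Finset.univ (n - k)]
    rw [show (fun i : Fin n => v ⟨(i : ℕ), by omega⟩) = a from rfl] at *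
    exact hmain ▸ hB'ne

end final
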